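/- Let D be a nonnegative k×n real matrix and f a nonnegative k-vector with D_{ij} ≤ f_i for all i ∈ [k] and j ∈ [n], and let c ∈ ℝ^n with c ≥ 0. Then sup{cᵀx : x ∈ ℝ^n, x ≥ 0, Dx ≤ f} ≤ (k+1)·sup{cᵀx : x ∈ ℤ^n, x ≥ 0, Dx ≤ f} (as an inequality in the extended reals; in particular if the LP value is unbounded then so is the IP value). -/

import Mathlib

open Finset

/-- Dot product of two vectors in `ℝ^n`. -/
def dotp {n : ℕ} (c x : Fin n → ℝ) : ℝ := ∑ j, c j * x j

/-- A point of `ℝ^n` is integral if all its coordinates are integers. -/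
def isIntPt {n : ℕ} (x : Fin n → ℝ) : Prop := ∀ j, ∃ z : ℤ, x j = (z : ℝ)

/-- The value `sup { cᵀ x : x ∈ S }`, in the extended reals. -/
noncomputable def supVal {n : ℕ} (c : Fin n → ℝ) (S : Set (Fin n → ℝ)) : EReal :=
  ⨆ x ∈ S, ((dotp c x : ℝ) : EReal)

/-- The value `inf { cᵀ x : x ∈ S }`, in the extended reals. -/
noncomputable def infVal {n : ℕ} (c : Fin n → ℝ) (S : Set (Fin n → ℝ)) : EReal :=
  ⨅ x ∈ S, ((dotp c x : ℝ) : EReal)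

/-- The polyhedron `{x ≥ 0 : A x ≤ b}`. -/
def packLP {n m : ℕ} (A : Matrix (Fin m) (Fin n) ℝ) (b : Fin m → ℝ) : Set (Fin n → ℝ) :=
  {x | (∀ j, 0 ≤ x j) ∧ ∀ i, dotp (A i) x ≤ b i}

/-- Aggregation closure of a packing polyhedron. -/
def aggP {n m : ℕ} (A : Matrix (Fin m) (Fin n) ℝ) (b : Fin m → ℝ) : Set (Fin n → ℝ) :=
  ⋂ lam : {l : Fin m → ℝ // ∀ i, 0 ≤ l i},
    convexHull ℝ {x | (∀ j, 0 ≤ x j) ∧ isIntPt x ∧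
      dotp (fun j => ∑ i, lam.1 i * A i j) x ≤ ∑ i, lam.1 i * b i}

/-- 1-row aggregation closure of a packing polyhedron. -/
def oneAggP {n m : ℕ} (A : Matrix (Fin m) (Fin n) ℝ) (b : Fin m → ℝ) : Set (Fin n → ℝ) :=
  ⋂ i : Fin m, convexHull ℝ {x | (∀ j, 0 ≤ x j) ∧ isIntPt x ∧ dotp (A i) x ≤ b i}

/-- Chvátal–Gomory closure of a set `P ⊆ ℝ^n`. -/
def cgClosure {n : ℕ} (P : Set (Fin n → ℝ)) : Set (Fin n → ℝ) :=
  {x | ∀ (c : Fin n → ℤ) (δ : ℝ),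
    (∀ y ∈ P, δ ≤ ∑ j, (c j : ℝ) * y j) → ((⌈δ⌉ : ℤ) : ℝ) ≤ ∑ j, (c j : ℝ) * x j}

/-- 1-row CG closure of a packing polyhedron. -/
def oneCGP {n m : ℕ} (A : Matrix (Fin m) (Fin n) ℝ) (b : Fin m → ℝ) : Set (Fin n → ℝ) :=
  ⋂ i : Fin m, cgClosure {x | (∀ j, 0 ≤ x j) ∧ dotp (A i) x ≤ b i}

/-- Covering polyhedron with bounds `u j` on coordinates `j ∈ J` (coordinates outside `J`
are unbounded above). -/
def coverLP {n m : ℕ} (A : Matrix (Fin m) (Fin n) ℝ) (b : Fin m → ℝ)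
    (J : Finset (Fin n)) (u : Fin n → ℝ) : Set (Fin n → ℝ) :=
  {x | (∀ j, 0 ≤ x j) ∧ (∀ j ∈ J, x j ≤ u j) ∧ ∀ i, b i ≤ dotp (A i) x}

/-- Aggregation closure of a covering polyhedron with bounds. -/
def aggC {n m : ℕ} (A : Matrix (Fin m) (Fin n) ℝ) (b : Fin m → ℝ)
    (J : Finset (Fin n)) (u : Fin n → ℝ) : Set (Fin n → ℝ) :=
  ⋂ lam : {l : Fin m → ℝ // ∀ i, 0 ≤ l i},
    convexHull ℝ {x | (∀ j, 0 ≤ x j) ∧ isIntPt x ∧ (∀ j ∈ J, x j ≤ u j) ∧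
      (∑ i, lam.1 i * b i) ≤ dotp (fun j => ∑ i, lam.1 i * A i j) x}

/-- 1-row aggregation closure of a covering polyhedron with bounds. -/
def oneAggC {n m : ℕ} (A : Matrix (Fin m) (Fin n) ℝ) (b : Fin m → ℝ)
    (J : Finset (Fin n)) (u : Fin n → ℝ) : Set (Fin n → ℝ) :=
  ⋂ i : Fin m, convexHull ℝ
    {x | (∀ j, 0 ≤ x j) ∧ isIntPt x ∧ (∀ j ∈ J, x j ≤ u j) ∧ b i ≤ dotp (A i) x}

/-- 1-row CG closure of a covering polyhedron with bounds. -/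
def oneCGC {n m : ℕ} (A : Matrix (Fin m) (Fin n) ℝ) (b : Fin m → ℝ)
    (J : Finset (Fin n)) (u : Fin n → ℝ) : Set (Fin n → ℝ) :=
  ⋂ i : Fin m, cgClosure {x | (∀ j, 0 ≤ x j) ∧ (∀ j ∈ J, x j ≤ u j) ∧ b i ≤ dotp (A i) x}

-- auxiliary: sign choice
lemma sign_choice {k n : ℕ} (D : Matrix (Fin k) (Fin n) ℝ) (c : Fin n → ℝ)
    (hD : ∀ i j, 0 ≤ D i j)
    (h0 : ∀ j, (∀ i, D i j = 0) → c j = 0)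
    (d : Fin n → ℝ) (hd : d ≠ 0) (hDd : ∀ i, ∑ j, d j * D i j = 0) :
    ∃ e : Fin n → ℝ, (∀ j, d j = 0 → e j = 0) ∧ (∀ i, ∑ j, e j * D i j = 0) ∧
      0 ≤ ∑ j, c j * e j ∧ ∃ j, e j < 0 := by
  have hzero : ∀ (s : Fin n → ℝ), (∀ j, 0 ≤ s j) → (∀ i, ∑ j, s j * D i j = 0) →
      ∑ j, c j * s j = 0 := by
    intro s hs hDs
    apply Finset.sum_eq_zero
    intro j _
    by_cases hj : s j = 0
    · simp [hj]
    · have hcj : c j = 0 := by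
        apply h0
        intro i
        have h1 : ∀ j' ∈ Finset.univ, 0 ≤ s j' * D i j' :=
          fun j' _ => mul_nonneg (hs j') (hD i j')
        have := (Finset.sum_eq_zero_iff_of_nonneg h1).mp (hDs i) j (Finset.mem_univ j)
        rcases mul_eq_zero.mp this with h | h
        · exact absurd h hj
        · exact h
      simp [hcj]
  by_cases hneg : ∃ j, d j < 0
  · by_cases hpos : ∃ j, 0 < d j
    · by_cases hcd : 0 ≤ ∑ j, c j * d j
      · exact ⟨d, fun j h => h, hDd, hcd, hneg⟩
      · refine ⟨-d, fun j h => by simp [h], fun i => ?_, ?_, ?_⟩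
        · simp only [Pi.neg_apply, neg_mul]
          rw [Finset.sum_neg_distrib, hDd i, neg_zero]
        · push_neg at hcd
          have : ∑ j, c j * (-d) j = -(∑ j, c j * d j) := by
            simp only [Pi.neg_apply, mul_neg]
            exact Finset.sum_neg_distrib _
          rw [this]
          linarith
        · obtain ⟨j, hj⟩ := hpos
          exact ⟨j, by simpa using hj⟩
    · -- d ≤ 0 everywhere; use s := -d ≥ 0
      push_neg at hpos
      have hs : ∀ j, 0 ≤ (-d) j := fun j => by simpa using hpos j
      have hDs : ∀ i, ∑ j, (-d) j * D i j = 0 := by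
        intro i
        simp only [Pi.neg_apply, neg_mul]
        rw [Finset.sum_neg_distrib, hDd i, neg_zero]
      have hcd0 := hzero (-d) hs hDs
      refine ⟨d, fun j h => h, hDd, ?_, hneg⟩
      have : ∑ j, c j * (-d) j = -(∑ j, c j * d j) := by
        simp only [Pi.neg_apply, mul_neg]
        exact Finset.sum_neg_distrib _
      rw [this] at hcd0
      linarith
  · -- d ≥ 0 everywhere
    push_neg at hneg
    have hcd0 := hzero d hneg hDd
    have hDnd : ∀ i, ∑ j, (-d) j * D i j = 0 := by
      intro i
      simp only [Pi.neg_apply, neg_mul]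
      rw [Finset.sum_neg_distrib, hDd i, neg_zero]
    refine ⟨-d, fun j h => by simp [h], hDnd, ?_, ?_⟩
    · have : ∑ j, c j * (-d) j = -(∑ j, c j * d j) := by
        simp only [Pi.neg_apply, mul_neg]
        exact Finset.sum_neg_distrib _
      rw [this, hcd0, neg_zero]
    · obtain ⟨j, hj⟩ : ∃ j, d j ≠ 0 := by
        by_contra h
        push_neg at h
        exact hd (funext h)
      exact ⟨j, by simpa using lt_of_le_of_ne (hneg j) (Ne.symm hj)⟩

lemma reduce_support {k n : ℕ} (D : Matrix (Fin k) (Fin n) ℝ) (f : Fin k → ℝ)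
    (hD : ∀ i j, 0 ≤ D i j) (c : Fin n → ℝ)
    (h0 : ∀ j, (∀ i, D i j = 0) → c j = 0) :
    ∀ N (x : Fin n → ℝ), (∀ j, 0 ≤ x j) → (∀ i, dotp (D i) x ≤ f i) →
      (Finset.univ.filter fun j => 0 < x j).card ≤ N →
      ∃ x', (∀ j, 0 ≤ x' j) ∧ (∀ i, dotp (D i) x' ≤ f i) ∧
        (Finset.univ.filter fun j => 0 < x' j).card ≤ k ∧ dotp c x ≤ dotp c x' := by
  intro N
  induction N with
  | zero =>
    intro x hx0 hxf hcard
    exact ⟨x, hx0, hxf, le_trans hcard (Nat.zero_le k), le_refl _⟩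
  | succ N ih =>
    intro x hx0 hxf hcard
    by_cases hk : (Finset.univ.filter fun j => 0 < x j).card ≤ k
    · exact ⟨x, hx0, hxf, hk, le_refl _⟩
    · push_neg at hk
      set S := Finset.univ.filter fun j => 0 < x j with hSdef
      -- linear dependence of the columns indexed by S
      have hcardS : k < Fintype.card ↥S := by rwa [Fintype.card_coe]
      have hnli : ¬ LinearIndependent ℝ (fun j : ↥S => (fun i => D i j.1 : Fin k → ℝ)) := by
        intro h
        have := h.fintype_card_le_finrank
        rw [Module.finrank_fintype_fun_eq_card, Fintype.card_fin] at this
        omega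
      obtain ⟨g, hgsum, i0, hi0⟩ := Fintype.not_linearIndependent_iff.mp hnli
      set d : Fin n → ℝ := fun j => if h : j ∈ S then g ⟨j, h⟩ else 0 with hddef
      have hdS : ∀ j, j ∉ S → d j = 0 := fun j hj => dif_neg hj
      have hdne : d ≠ 0 := by
        intro h
        apply hi0
        have : d i0.1 = g i0 := by
          rw [hddef]; simp only; rw [dif_pos i0.2]
        rw [h] at this
        exact this.symm
      have hDd : ∀ i, ∑ j, d j * D i j = 0 := by
        intro i
        have h1 : ∑ j ∈ S, d j * D i j = ∑ j, d j * D i j := by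
          apply Finset.sum_subset (Finset.subset_univ S)
          intro j _ hj
          rw [hdS j hj, zero_mul]
        rw [← h1]
        have h2 : ∑ j ∈ S, d j * D i j = ∑ j ∈ S.attach, d j.1 * D i j.1 :=
          (Finset.sum_attach S _).symm
        rw [h2]
        have h3 := congrFun hgsum i
        simp only [Finset.sum_apply, Pi.smul_apply, smul_eq_mul, Pi.zero_apply] at h3
        rw [← h3]
        apply Finset.sum_congr rfl
        intro j _
        have : d j.1 = g j := by rw [hddef]; simp only; rw [dif_pos j.2]
        rw [this]
      obtain ⟨e, he0, hDe, hce, jneg, hjneg⟩ := sign_choice D c hD h0 d hdne hDd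
      have heS : ∀ j, j ∉ S → e j = 0 := fun j hj => he0 j (hdS j hj)
      -- the step length
      have hTne : (Finset.univ.filter fun j => e j < 0).Nonempty :=
        ⟨jneg, by simp [hjneg]⟩
      obtain ⟨j0, hj0mem, hj0min⟩ :=
        Finset.exists_min_image (Finset.univ.filter fun j => e j < 0)
          (fun j => x j / (-e j)) hTne
      have hj0neg : e j0 < 0 := (Finset.mem_filter.mp hj0mem).2
      set t := x j0 / (-e j0) with htdef
      have ht0 : 0 ≤ t := div_nonneg (hx0 j0) (by linarith)
      set x' : Fin n → ℝ := fun j => x j + t * e j with hx'def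
      have hx'0 : ∀ j, 0 ≤ x' j := by
        intro j
        by_cases hj : e j < 0
        · have hjmem : j ∈ Finset.univ.filter fun j => e j < 0 := by simp [hj]
          have := hj0min j hjmem
          have h1 : t * (-e j) ≤ x j := by
            rw [le_div_iff₀ (by linarith : (0:ℝ) < -e j)] at this
            linarith
          simp only [hx'def]
          nlinarith
        · push_neg at hj
          simp only [hx'def]
          have := mul_nonneg ht0 hj
          linarith [hx0 j]
      have hsplit : ∀ (w : Fin n → ℝ), ∑ j, w j * x' j
          = (∑ j, w j * x j) + t * ∑ j, e j * w j := by
        intro w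
        simp only [hx'def]
        rw [Finset.mul_sum, ← Finset.sum_add_distrib]
        apply Finset.sum_congr rfl
        intro j _
        ring
      have hx'f : ∀ i, dotp (D i) x' ≤ f i := by
        intro i
        have := hsplit (D i)
        simp only [dotp] at *
        rw [this, hDe i, mul_zero, add_zero]
        exact hxf i
      have hx'c : dotp c x ≤ dotp c x' := by
        have := hsplit c
        simp only [dotp] at *
        rw [this]
        have hce' : 0 ≤ ∑ j, e j * c j := by
          rw [Finset.sum_congr rfl (fun j _ => mul_comm (e j) (c j))]
          exact hce
        nlinarith [mul_nonneg ht0 hce']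
      -- support strictly decreases
      have hj0S : j0 ∈ S := by
        by_contra h
        rw [heS j0 h] at hj0neg
        exact lt_irrefl 0 hj0neg
      have hx'j0 : x' j0 = 0 := by
        have hne : e j0 ≠ 0 := ne_of_lt hj0neg
        simp only [hx'def, htdef]
        rw [div_mul_eq_mul_div, div_neg, mul_div_assoc, div_self hne, mul_one]
        ring
      have hsub : (Finset.univ.filter fun j => 0 < x' j) ⊆ S.erase j0 := by
        intro j hj
        have hxj' : 0 < x' j := (Finset.mem_filter.mp hj).2
        have hjS : j ∈ S := by
          by_contra h
          have hx0j : x j = 0 := by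
            have : ¬ 0 < x j := by
              intro hh
              exact h (by simp [hSdef, hh])
            linarith [hx0 j]
          have : x' j = 0 := by simp [hx'def, hx0j, heS j h]
          rw [this] at hxj'
          exact lt_irrefl 0 hxj'
        refine Finset.mem_erase.mpr ⟨?_, hjS⟩
        intro h
        rw [h, hx'j0] at hxj'
        exact lt_irrefl 0 hxj'
      have hcard' : (Finset.univ.filter fun j => 0 < x' j).card ≤ N := by
        have h1 := Finset.card_le_card hsub
        have h2 := Finset.card_erase_of_mem hj0S
        have h3 : S.card ≤ N + 1 := hcard
        omega
      obtain ⟨x'', h1, h2, h3, h4⟩ := ih x' hx'0 hx'f hcard'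
      exact ⟨x'', h1, h2, h3, le_trans hx'c h4⟩

lemma key_real {k n : ℕ} (D : Matrix (Fin k) (Fin n) ℝ) (f : Fin k → ℝ)
    (hD : ∀ i j, 0 ≤ D i j) (hf : ∀ i, 0 ≤ f i) (hDf : ∀ i j, D i j ≤ f i)
    (c : Fin n → ℝ) (hc : ∀ j, 0 ≤ c j) (m : ℝ)
    (hm : ∀ y : Fin n → ℝ, (∀ j, 0 ≤ y j) → isIntPt y → (∀ i, dotp (D i) y ≤ f i) →
      dotp c y ≤ m)
    (x : Fin n → ℝ) (hx0 : ∀ j, 0 ≤ x j) (hxf : ∀ i, dotp (D i) x ≤ f i) :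
    dotp c x ≤ (k + 1) * m := by
  have hm0 : 0 ≤ m := by
    have := hm (fun _ => 0) (fun j => le_refl 0) (fun j => ⟨0, by simp⟩)
      (fun i => by simpa [dotp] using hf i)
    simpa [dotp] using this
  have hcm : ∀ j, c j ≤ m := by
    intro j
    have := hm (fun j' => if j' = j then 1 else 0)
      (fun j' => by split <;> norm_num)
      (fun j' => by by_cases h : j' = j <;> [exact ⟨1, by simp [h]⟩; exact ⟨0, by simp [h]⟩])
      (fun i => by
        simp only [dotp, mul_ite, mul_one, mul_zero, Finset.sum_ite_eq',
          Finset.mem_univ, if_true]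
        exact hDf i j)
    simpa [dotp, Finset.sum_ite_eq'] using this
  have h0 : ∀ j, (∀ i, D i j = 0) → c j = 0 := by
    intro j hDj
    by_contra hcj
    have hcjpos : 0 < c j := lt_of_le_of_ne (hc j) (Ne.symm hcj)
    obtain ⟨t, ht⟩ := exists_nat_gt (m / c j)
    have hfeas := hm (fun j' => if j' = j then (t : ℝ) else 0)
      (fun j' => by split <;> positivity)
      (fun j' => by by_cases h : j' = j <;> [exact ⟨t, by simp [h]⟩; exact ⟨0, by simp [h]⟩])
      (fun i => by
        simp only [dotp, mul_ite, mul_zero, Finset.sum_ite_eq',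
          Finset.mem_univ, if_true]
        rw [hDj i]
        simpa using hf i)
    simp only [dotp, mul_ite, mul_zero, Finset.sum_ite_eq', Finset.mem_univ, if_true] at hfeas
    rw [div_lt_iff₀ hcjpos] at ht
    nlinarith
  obtain ⟨x', hx'0, hx'f, hx'card, hx'c⟩ :=
    reduce_support D f hD c h0 (Finset.univ.filter fun j => 0 < x j).card x hx0 hxf (le_refl _)
  -- floor of x'
  set y : Fin n → ℝ := fun j => (⌊x' j⌋ : ℝ) with hydef
  have hy0 : ∀ j, 0 ≤ y j := by
    intro j
    simp only [hydef]
    exact_mod_cast Int.floor_nonneg.mpr (hx'0 j)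
  have hyx' : ∀ j, y j ≤ x' j := fun j => Int.floor_le (x' j)
  have hyf : ∀ i, dotp (D i) y ≤ f i := by
    intro i
    refine le_trans ?_ (hx'f i)
    apply Finset.sum_le_sum
    intro j _
    exact mul_le_mul_of_nonneg_left (hyx' j) (hD i j)
  have hym : dotp c y ≤ m := hm y hy0 (fun j => ⟨⌊x' j⌋, rfl⟩) hyf
  -- fractional part bound
  have hfrac : ∑ j, c j * (x' j - y j) ≤ (k : ℝ) * m := by
    have h1 : ∑ j, c j * (x' j - y j)
        = ∑ j ∈ Finset.univ.filter (fun j => 0 < x' j), c j * (x' j - y j) := by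
      symm
      apply Finset.sum_subset (Finset.subset_univ _)
      intro j _ hj
      have hx'j : x' j = 0 := by
        simp only [Finset.mem_filter, Finset.mem_univ, true_and] at hj
        linarith [hx'0 j]
      have : y j = 0 := by simp [hydef, hx'j]
      rw [hx'j, this]
      ring
    rw [h1]
    calc ∑ j ∈ Finset.univ.filter (fun j => 0 < x' j), c j * (x' j - y j)
        ≤ ∑ _j ∈ Finset.univ.filter (fun j => 0 < x' j), m := by
          apply Finset.sum_le_sum
          intro j _
          have hlt : x' j - y j < 1 := by
            have := Int.sub_one_lt_floor (x' j)
            simp only [hydef]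
            linarith
          have hge : 0 ≤ x' j - y j := by linarith [hyx' j]
          calc c j * (x' j - y j) ≤ c j * 1 :=
                mul_le_mul_of_nonneg_left (by linarith) (hc j)
            _ = c j := mul_one _
            _ ≤ m := hcm j
      _ = (Finset.univ.filter (fun j => 0 < x' j)).card * m := by
          rw [Finset.sum_const, nsmul_eq_mul]
      _ ≤ (k : ℝ) * m := by
          apply mul_le_mul_of_nonneg_right _ hm0
          exact_mod_cast hx'card
  have hsplit : dotp c x' = dotp c y + ∑ j, c j * (x' j - y j) := by
    simp only [dotp]
    rw [← Finset.sum_add_distrib]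
    apply Finset.sum_congr rfl
    intro j _
    ring
  calc dotp c x ≤ dotp c x' := hx'c
    _ = dotp c y + ∑ j, c j * (x' j - y j) := hsplit
    _ ≤ m + (k : ℝ) * m := add_le_add hym hfrac
    _ = (k + 1) * m := by ring

theorem stmt13 {k n : ℕ} (D : Matrix (Fin k) (Fin n) ℝ) (f : Fin k → ℝ)
    (hD : ∀ i j, 0 ≤ D i j) (hf : ∀ i, 0 ≤ f i) (hDf : ∀ i j, D i j ≤ f i)
    (c : Fin n → ℝ) (hc : ∀ j, 0 ≤ c j) :
    supVal c {x | (∀ j, 0 ≤ x j) ∧ ∀ i, dotp (D i) x ≤ f i}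
      ≤ ((k + 1 : ℝ) : EReal)
          * supVal c {x | (∀ j, 0 ≤ x j) ∧ isIntPt x ∧ ∀ i, dotp (D i) x ≤ f i} := by
  set M := supVal c {x : Fin n → ℝ | (∀ j, 0 ≤ x j) ∧ isIntPt x ∧ ∀ i, dotp (D i) x ≤ f i}
    with hMdef
  have h0mem : (fun _ => (0:ℝ)) ∈
      {x : Fin n → ℝ | (∀ j, 0 ≤ x j) ∧ isIntPt x ∧ ∀ i, dotp (D i) x ≤ f i} :=
    ⟨fun j => le_refl 0, fun j => ⟨0, by simp⟩, fun i => by simpa [dotp] using hf i⟩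
  have h0M : (0 : EReal) ≤ M := by
    have h1 : ((dotp c (fun _ => 0) : ℝ) : EReal) ≤ M := by
      rw [hMdef, supVal]
      exact le_iSup₂_of_le (fun _ => (0:ℝ)) h0mem (le_refl _)
    simpa [dotp] using h1
  by_cases htop : M = ⊤
  · rw [htop]
    rw [EReal.mul_top_of_pos (by exact_mod_cast (by positivity : (0:ℝ) < k + 1))]
    exact le_top
  · obtain ⟨m, hMm⟩ : ∃ m : ℝ, M = (m : EReal) := by
      have hbot : M ≠ ⊥ := fun h => by rw [h] at h0M; exact absurd h0M (by simp)
      exact ⟨M.toReal, (EReal.coe_toReal htop hbot).symm⟩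
    have hub : ∀ y : Fin n → ℝ, (∀ j, 0 ≤ y j) → isIntPt y → (∀ i, dotp (D i) y ≤ f i) →
        dotp c y ≤ m := by
      intro y h1 h2 h3
      have h4 : ((dotp c y : ℝ) : EReal) ≤ M := by
        rw [hMdef, supVal]
        exact le_iSup₂_of_le y ⟨h1, h2, h3⟩ (le_refl _)
      rw [hMm] at h4
      exact_mod_cast h4
    rw [hMm, ← EReal.coe_mul]
    rw [supVal]
    apply iSup₂_le
    intro x hx
    have := key_real D f hD hf hDf c hc m hub x hx.1 hx.2
    exact_mod_cast this
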